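/- Let $T > 0$ and let $f : (0,T] \to \mathbb{R}$ be differentiable such that the integrals $\int_\varepsilon^T f(s)\,ds$ neither diverge to $+\infty$ nor to $-\infty$ as $\varepsilon \searrow 0$. Let $h : (0,T] \to (0,\infty)$ be a non-increasing differentiable function with $\int_0^T h(s)\,ds = +\infty$. Then there exists a sequence $t_k \searrow 0$ such that $|f(t_k)| \le h(t_k)$ and $f'(t_k) \ge h'(t_k)$ for every $k$. -/
import Mathlib

open MeasureTheory Set Filter Topology

/-- If `g` has derivative `g'` at `a` and `g a` is a minimum on `[a,b]` to the right,
then `0 ≤ g'`. -/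
lemma aux_right_min {g : ℝ → ℝ} {g' a b : ℝ} (hab : a < b) (hg : HasDerivAt g g' a)
    (H : ∀ s ∈ Ioc a b, g a ≤ g s) : 0 ≤ g' := by
  have h1 : HasDerivWithinAt g g' (Ioi a) a := hg.hasDerivWithinAt
  rw [hasDerivWithinAt_iff_tendsto_slope] at h1
  have hs : Ioi a \ {a} = Ioi a := Set.diff_singleton_eq_self (by simp)
  rw [hs] at h1
  refine ge_of_tendsto h1 ?_
  filter_upwards [Ioc_mem_nhdsGT_of_mem ⟨le_rfl, hab⟩] with s hsmem
  rw [slope_def_field]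
  exact div_nonneg (sub_nonneg.mpr (H s hsmem)) (sub_nonneg.mpr hsmem.1.le)

/-- If `g` has derivative `g'` at `a` and `g a` is a maximum on `[b,a]` to the left,
then `0 ≤ g'`. -/
lemma aux_left_max {g : ℝ → ℝ} {g' a b : ℝ} (hba : b < a) (hg : HasDerivAt g g' a)
    (H : ∀ s ∈ Ico b a, g s ≤ g a) : 0 ≤ g' := by
  have h1 : HasDerivWithinAt g g' (Iio a) a := hg.hasDerivWithinAt
  rw [hasDerivWithinAt_iff_tendsto_slope] at h1
  have hs : Iio a \ {a} = Iio a := Set.diff_singleton_eq_self (by simp)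
  rw [hs] at h1
  refine ge_of_tendsto h1 ?_
  filter_upwards [Ico_mem_nhdsLT_of_mem ⟨hba, le_rfl⟩] with s hsmem
  rw [slope_def_field]
  exact div_nonneg_iff.mpr (Or.inr ⟨sub_nonpos.mpr (H s hsmem), sub_nonpos.mpr hsmem.2.le⟩)

/-- If `g` has derivative `g'` at `a` and `g a` is a minimum on `[b,a]` to the left,
then `g' ≤ 0`. -/
lemma aux_left_min {g : ℝ → ℝ} {g' a b : ℝ} (hba : b < a) (hg : HasDerivAt g g' a)
    (H : ∀ s ∈ Ico b a, g a ≤ g s) : g' ≤ 0 := by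
  have h1 : HasDerivWithinAt g g' (Iio a) a := hg.hasDerivWithinAt
  rw [hasDerivWithinAt_iff_tendsto_slope] at h1
  have hs : Iio a \ {a} = Iio a := Set.diff_singleton_eq_self (by simp)
  rw [hs] at h1
  refine le_of_tendsto h1 ?_
  filter_upwards [Ico_mem_nhdsLT_of_mem ⟨hba, le_rfl⟩] with s hsmem
  rw [slope_def_field]
  exact div_nonpos_iff.mpr (Or.inl ⟨sub_nonneg.mpr (H s hsmem), sub_nonpos.mpr hsmem.2.le⟩)

lemma aux_cont_right {g : ℝ → ℝ} {t b : ℝ} (hg : ContinuousAt g t) (htb : t < b)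
    (H : ∀ s ∈ Ioc t b, 0 ≤ g s) : 0 ≤ g t := by
  refine ge_of_tendsto (hg.tendsto.mono_left (nhdsWithin_le_nhds : 𝓝[>] t ≤ 𝓝 t)) ?_
  filter_upwards [Ioc_mem_nhdsGT_of_mem ⟨le_rfl, htb⟩] with s hs using H s hs

lemma aux_cont_left {g : ℝ → ℝ} {t b : ℝ} (hg : ContinuousAt g t) (hbt : b < t)
    (H : ∀ s ∈ Ico b t, g s ≤ 0) : g t ≤ 0 := by
  refine le_of_tendsto (hg.tendsto.mono_left (nhdsWithin_le_nhds : 𝓝[<] t ≤ 𝓝 t)) ?_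
  filter_upwards [Ico_mem_nhdsLT_of_mem ⟨hbt, le_rfl⟩] with s hs using H s hs

/-- If `f ≥ h + c` near zero and `∫ h` diverges, then `∫ f` diverges. -/
lemma aux_int_top {T a c : ℝ} (ha : 0 < a) (haT : a ≤ T) {f h : ℝ → ℝ}
    (hfc : ContinuousOn f (Ioc 0 T)) (hhc : ContinuousOn h (Ioc 0 T))
    (hbound : ∀ t ∈ Ioc 0 a, h t + c ≤ f t)
    (hhint : Tendsto (fun ε => ∫ s in ε..T, h s) (𝓝[>] (0:ℝ)) atTop) :
    Tendsto (fun ε => ∫ s in ε..T, f s) (𝓝[>] (0:ℝ)) atTop := by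
  have hint : ∀ (g : ℝ → ℝ), ContinuousOn g (Ioc 0 T) → ∀ x y : ℝ, 0 < x → x ≤ y → y ≤ T →
      IntervalIntegrable g volume x y := by
    intro g hg x y hx hxy hyT
    apply (hg.mono ?_).intervalIntegrable
    rw [uIcc_of_le hxy]
    exact fun z hz => ⟨lt_of_lt_of_le hx hz.1, le_trans hz.2 hyT⟩
  set K := (∫ s in a..T, f s) - (∫ s in a..T, h s) - |c| * a with hK
  refine tendsto_atTop_mono' _ ?_ (tendsto_atTop_add_const_right _ K hhint)
  filter_upwards [Ioo_mem_nhdsGT_of_mem (α := ℝ) ⟨le_rfl, ha⟩] with ε hε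
  obtain ⟨hε0, hεa⟩ := hε
  have if1 : IntervalIntegrable f volume ε a := hint f hfc ε a hε0 hεa.le haT
  have if2 : IntervalIntegrable f volume a T := hint f hfc a T ha haT le_rfl
  have ih1 : IntervalIntegrable h volume ε a := hint h hhc ε a hε0 hεa.le haT
  have ih2 : IntervalIntegrable h volume a T := hint h hhc a T ha haT le_rfl
  have e1 : (∫ s in ε..T, f s) = (∫ s in ε..a, f s) + ∫ s in a..T, f s :=
    (intervalIntegral.integral_add_adjacent_intervals if1 if2).symm
  have e2 : (∫ s in ε..T, h s) = (∫ s in ε..a, h s) + ∫ s in a..T, h s :=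
    (intervalIntegral.integral_add_adjacent_intervals ih1 ih2).symm
  have mono : (∫ s in ε..a, h s) + (a - ε) * c ≤ ∫ s in ε..a, f s := by
    have hm : (∫ s in ε..a, (h s + c)) ≤ ∫ s in ε..a, f s := by
      refine intervalIntegral.integral_mono_on hεa.le (ih1.add intervalIntegrable_const) if1 ?_
      exact fun x hx => hbound x ⟨lt_of_lt_of_le hε0 hx.1, hx.2⟩
    rw [intervalIntegral.integral_add ih1 intervalIntegrable_const,
      intervalIntegral.integral_const] at hm
    simpa [smul_eq_mul] using hm
  have habs : -(|c| * a) ≤ (a - ε) * c := by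
    nlinarith [mul_le_mul_of_nonneg_left (neg_abs_le c) (by linarith : (0:ℝ) ≤ a - ε),
      mul_le_mul_of_nonneg_right (by linarith : a - ε ≤ a) (abs_nonneg c)]
  rw [e1, e2]
  simp only [hK]
  linarith

/-- Subsequence extraction lemma: along a sequence `t_k ↘ 0` one has
`|f(t_k)| ≤ h(t_k)` and `f'(t_k) ≥ h'(t_k)`. -/
theorem stmt_2 (T : ℝ) (hT : 0 < T)
    (f f' : ℝ → ℝ) (hf : ∀ t ∈ Ioc 0 T, HasDerivAt f (f' t) t)
    (hfint_top : ¬ Tendsto (fun ε => ∫ s in ε..T, f s) (nhdsWithin 0 (Ioi 0)) atTop)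
    (hfint_bot : ¬ Tendsto (fun ε => ∫ s in ε..T, f s) (nhdsWithin 0 (Ioi 0)) atBot)
    (h h' : ℝ → ℝ) (hh : ∀ t ∈ Ioc 0 T, HasDerivAt h (h' t) t)
    (hhpos : ∀ t ∈ Ioc 0 T, 0 < h t)
    (hhmono : AntitoneOn h (Ioc 0 T))
    (hhint : Tendsto (fun ε => ∫ s in ε..T, h s) (nhdsWithin 0 (Ioi 0)) atTop) :
    ∃ t : ℕ → ℝ, (∀ k, t k ∈ Ioc 0 T) ∧ StrictAnti t ∧
      Tendsto t atTop (nhds 0) ∧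
      ∀ k, |f (t k)| ≤ h (t k) ∧ f' (t k) ≥ h' (t k) := by
  have hfC : ∀ t ∈ Ioc 0 T, ContinuousAt f t := fun t ht => (hf t ht).continuousAt
  have hhC : ∀ t ∈ Ioc 0 T, ContinuousAt h t := fun t ht => (hh t ht).continuousAt
  have hfc : ContinuousOn f (Ioc 0 T) := fun t ht => (hfC t ht).continuousWithinAt
  have hhc : ContinuousOn h (Ioc 0 T) := fun t ht => (hhC t ht).continuousWithinAt
  have hh'le : ∀ t ∈ Ioo 0 T, h' t ≤ 0 := by
    intro t ht
    refine aux_left_min (b := t/2) (by linarith [ht.1]) (hh t ⟨ht.1, ht.2.le⟩) ?_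
    intro s hs
    exact hhmono ⟨by linarith [hs.1, ht.1], by linarith [hs.2, ht.2]⟩ ⟨ht.1, ht.2.le⟩ hs.2.le
  -- main claim: good points exist arbitrarily close to 0
  have key : ∀ δ : ℝ, 0 < δ → δ < T → ∃ u, (0 < u ∧ u ≤ δ) ∧ |f u| ≤ h u ∧ h' u ≤ f' u := by
    intro δ hδ0 hδT
    by_contra hcon
    push_neg at hcon
    have hbad : ∀ u ∈ Ioc 0 δ, |f u| ≤ h u → f' u < h' u :=
      fun u hu habs => hcon u ⟨hu.1, hu.2⟩ habs
    have hmemT : ∀ u ∈ Ioc 0 δ, u ∈ Ioc 0 T := fun u hu => ⟨hu.1, hu.2.trans hδT.le⟩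
    set v : ℝ → ℝ := fun t => f t - h t with hv
    set w : ℝ → ℝ := fun t => f t + h t with hw
    have hvC : ∀ u ∈ Ioc 0 T, ContinuousAt v u := fun u hu => (hfC u hu).sub (hhC u hu)
    have hwC : ∀ u ∈ Ioc 0 T, ContinuousAt w u := fun u hu => (hfC u hu).add (hhC u hu)
    -- Claim 1 : positivity of v propagates towards 0
    have claim1 : ∀ t₀ ∈ Ioc 0 δ, 0 < v t₀ → ∀ s ∈ Ioc 0 t₀, 0 < v s := by
      intro t₀ ht₀ hvt₀ s hs
      by_contra hvs
      push_neg at hvs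
      have hst₀ : s < t₀ := lt_of_le_of_ne hs.2 (fun he => by rw [he] at hvs; linarith)
      set S := Icc s t₀ ∩ v ⁻¹' Iic 0 with hS
      have hsubT : Icc s t₀ ⊆ Ioc 0 T := fun x hx =>
        ⟨lt_of_lt_of_le hs.1 hx.1, (hx.2.trans ht₀.2).trans hδT.le⟩
      have hvcont : ContinuousOn v (Icc s t₀) := fun x hx =>
        (hvC x (hsubT hx)).continuousWithinAt
      have hScl : IsClosed S := hvcont.preimage_isClosed_of_isClosed isClosed_Icc isClosed_Iic
      have hScp : IsCompact S := isCompact_Icc.of_isClosed_subset hScl inter_subset_left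
      have hSne : S.Nonempty := ⟨s, ⟨le_rfl, hst₀.le⟩, hvs⟩
      set t₁ := sSup S with ht₁
      have ht₁S : t₁ ∈ S := hScp.sSup_mem hSne
      have ht₁mem : t₁ ∈ Ioc 0 T := hsubT ht₁S.1
      have ht₁δ : t₁ ∈ Ioc 0 δ := ⟨ht₁mem.1, ht₁S.1.2.trans ht₀.2⟩
      have ht₁lt : t₁ < t₀ := lt_of_le_of_ne ht₁S.1.2 (fun he => by
        have := ht₁S.2; rw [he] at this; exact absurd hvt₀ (by simpa using this))
      have hpos : ∀ x ∈ Ioc t₁ t₀, 0 < v x := by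
        intro x hx
        by_contra hx0
        push_neg at hx0
        have hxS : x ∈ S := ⟨⟨ht₁S.1.1.trans hx.1.le, hx.2⟩, hx0⟩
        exact absurd (le_csSup hScp.bddAbove hxS) (not_le.mpr hx.1)
      have hv0 : v t₁ = 0 :=
        le_antisymm ht₁S.2 (aux_cont_right (hvC t₁ ht₁mem) ht₁lt (fun x hx => (hpos x hx).le))
      have hft₁ : f t₁ = h t₁ := by
        have : f t₁ - h t₁ = 0 := hv0
        linarith
      have habs : |f t₁| ≤ h t₁ := by rw [hft₁, abs_of_pos (hhpos t₁ ht₁mem)]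
      have hlt := hbad t₁ ht₁δ habs
      have hd : HasDerivAt v (f' t₁ - h' t₁) t₁ := (hf t₁ ht₁mem).sub (hh t₁ ht₁mem)
      have h0 := aux_right_min ht₁lt hd (fun x hx => by rw [hv0]; exact (hpos x hx).le)
      linarith
    -- Claim 2 : negativity of w propagates away from 0
    have claim2 : ∀ t₀ ∈ Ioc 0 δ, w t₀ < 0 → ∀ t₂ ∈ Ioc 0 δ, t₀ ≤ t₂ → w t₂ < 0 := by
      intro t₀ ht₀ hwt₀ t₂ ht₂ hle
      by_contra hge
      push_neg at hge
      have ht₀t₂ : t₀ < t₂ := lt_of_le_of_ne hle (fun he => by rw [he] at hwt₀; linarith)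
      set S := Icc t₀ t₂ ∩ w ⁻¹' Ici 0 with hS
      have hsubT : Icc t₀ t₂ ⊆ Ioc 0 T := fun x hx =>
        ⟨lt_of_lt_of_le ht₀.1 hx.1, (hx.2.trans ht₂.2).trans hδT.le⟩
      have hwcont : ContinuousOn w (Icc t₀ t₂) := fun x hx =>
        (hwC x (hsubT hx)).continuousWithinAt
      have hScl : IsClosed S := hwcont.preimage_isClosed_of_isClosed isClosed_Icc isClosed_Ici
      have hScp : IsCompact S := isCompact_Icc.of_isClosed_subset hScl inter_subset_left
      have hSne : S.Nonempty := ⟨t₂, ⟨ht₀t₂.le, le_rfl⟩, hge⟩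
      set t₁ := sInf S with ht₁
      have ht₁S : t₁ ∈ S := hScp.sInf_mem hSne
      have ht₁mem : t₁ ∈ Ioc 0 T := hsubT ht₁S.1
      have ht₁δ : t₁ ∈ Ioc 0 δ := ⟨ht₁mem.1, ht₁S.1.2.trans ht₂.2⟩
      have ht₀t₁ : t₀ < t₁ := lt_of_le_of_ne ht₁S.1.1 (fun he => by
        have := ht₁S.2; rw [← he] at this; simp at this; linarith)
      have hneg : ∀ x ∈ Ico t₀ t₁, w x < 0 := by
        intro x hx
        by_contra hx0
        push_neg at hx0
        have hxS : x ∈ S := ⟨⟨hx.1, hx.2.le.trans ht₁S.1.2⟩, hx0⟩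
        exact absurd (csInf_le hScp.bddBelow hxS) (not_le.mpr hx.2)
      have hw0 : w t₁ = 0 :=
        le_antisymm (aux_cont_left (hwC t₁ ht₁mem) ht₀t₁ (fun x hx => (hneg x hx).le)) ht₁S.2
      have hft₁ : f t₁ = -h t₁ := by
        have : f t₁ + h t₁ = 0 := hw0
        linarith
      have habs : |f t₁| ≤ h t₁ := by
        rw [hft₁, abs_neg, abs_of_pos (hhpos t₁ ht₁mem)]
      have hlt := hbad t₁ ht₁δ habs
      have hh'0 : h' t₁ ≤ 0 := hh'le t₁ ⟨ht₁mem.1, lt_of_le_of_lt ht₁δ.2 hδT⟩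
      have hd : HasDerivAt w (f' t₁ + h' t₁) t₁ := (hf t₁ ht₁mem).add (hh t₁ ht₁mem)
      have h0 := aux_left_max ht₀t₁ hd (fun x hx => by rw [hw0]; exact (hneg x hx).le)
      linarith
    by_cases hA : ∃ t₀ ∈ Ioc 0 δ, 0 < v t₀
    · obtain ⟨t₀, ht₀, hvt₀⟩ := hA
      apply hfint_top
      refine aux_int_top (c := 0) ht₀.1 (ht₀.2.trans hδT.le) hfc hhc ?_ hhint
      intro t ht
      have := claim1 t₀ ht₀ hvt₀ t ht
      simp only [hv] at this
      linarith
    · push_neg at hA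
      by_cases hB : ∃ a ∈ Ioc 0 δ, ∀ t ∈ Ioc 0 a, 0 ≤ w t
      · obtain ⟨a, ha, hwpos⟩ := hB
        have hsub : Ioc 0 a ⊆ Ioc 0 T := fun x hx => ⟨hx.1, (hx.2.trans ha.2).trans hδT.le⟩
        have hanti : StrictAntiOn v (Ioc 0 a) := by
          apply strictAntiOn_of_deriv_neg (convex_Ioc 0 a)
          · exact fun x hx => ((hvC x (hsub hx)).continuousWithinAt)
          · intro x hx
            rw [interior_Ioc] at hx
            have hxδ : x ∈ Ioc 0 δ := ⟨hx.1, hx.2.le.trans ha.2⟩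
            have hxT : x ∈ Ioc 0 T := hmemT x hxδ
            have hd : HasDerivAt v (f' x - h' x) x := (hf x hxT).sub (hh x hxT)
            rw [hd.deriv]
            have hvx := hA x hxδ
            have hwx := hwpos x ⟨hx.1, hx.2.le⟩
            simp only [hv] at hvx
            simp only [hw] at hwx
            have habs : |f x| ≤ h x := abs_le.mpr ⟨by linarith, by linarith⟩
            have := hbad x hxδ habs
            linarith
        apply hfint_top
        refine aux_int_top (c := v a) ha.1 (ha.2.trans hδT.le) hfc hhc ?_ hhint
        intro t ht
        rcases eq_or_lt_of_le ht.2 with he | hlt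
        · rw [he]
          simp only [hv]
          linarith
        · have hva := hanti ht ⟨ha.1, le_rfl⟩ hlt
          simp only [hv] at hva ⊢
          linarith
      · push_neg at hB
        have hwneg : ∀ s ∈ Ioc 0 δ, w s < 0 := by
          intro s hs
          obtain ⟨t, ht, hwt⟩ := hB s hs
          exact claim2 t ⟨ht.1, ht.2.trans hs.2⟩ hwt s hs ht.2
        apply hfint_bot
        have hneg : Tendsto (fun ε => ∫ s in ε..T, -f s) (𝓝[>] (0:ℝ)) atTop := by
          refine aux_int_top (c := 0) hδ0 hδT.le hfc.neg hhc ?_ hhint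
          intro t ht
          have := hwneg t ht
          simp only [hw] at this
          linarith
        simp only [intervalIntegral.integral_neg] at hneg
        exact tendsto_neg_atTop_iff.mp hneg
  -- construct the sequence
  have key' : ∀ x : ℝ, ∃ y : ℝ,
      (0 < x ∧ x < T) → ((0 < y ∧ y ≤ x/2) ∧ |f y| ≤ h y ∧ h' y ≤ f' y) := by
    intro x
    by_cases hx : 0 < x ∧ x < T
    · obtain ⟨u, hu1, hu2⟩ := key (x/2) (by linarith [hx.1]) (by linarith [hx.1, hx.2])
      exact ⟨u, fun _ => ⟨hu1, hu2⟩⟩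
    · exact ⟨0, fun hc => absurd hc hx⟩
  choose F hF using key'
  set t : ℕ → ℝ := fun n => Nat.rec (F (T/2)) (fun _ y => F y) n with htdef
  have ht0 : t 0 = F (T/2) := rfl
  have htsucc : ∀ n, t (n+1) = F (t n) := fun n => rfl
  have hinv : ∀ n, (0 < t n ∧ t n < T/2) ∧ |f (t n)| ≤ h (t n) ∧ h' (t n) ≤ f' (t n) := by
    intro n
    induction n with
    | zero =>
      have hh2 := hF (T/2) ⟨by linarith, by linarith⟩
      rw [ht0]
      exact ⟨⟨hh2.1.1, by linarith [hh2.1.2]⟩, hh2.2⟩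
    | succ n ih =>
      have hh2 := hF (t n) ⟨ih.1.1, by linarith [ih.1.2]⟩
      rw [htsucc n]
      exact ⟨⟨hh2.1.1, by linarith [hh2.1.2, ih.1.2, ih.1.1]⟩, hh2.2⟩
  have hdec : ∀ n, t (n+1) < t n := by
    intro n
    have hh2 := (hF (t n) ⟨(hinv n).1.1, by linarith [(hinv n).1.2]⟩).1.2
    rw [htsucc n]
    linarith [(hinv n).1.1]
  have hbound : ∀ n, t n ≤ T/2 * (1/2)^n := by
    intro n
    induction n with
    | zero => simpa using (hinv 0).1.2.le
    | succ n ih =>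
      have hh2 := (hF (t n) ⟨(hinv n).1.1, by linarith [(hinv n).1.2]⟩).1.2
      rw [htsucc n]
      have : ((1:ℝ)/2)^(n+1) = (1/2)^n / 2 := by rw [pow_succ]; ring
      rw [this]
      linarith
  have htend : Tendsto t atTop (nhds (0:ℝ)) := by
    have hg : Tendsto (fun n : ℕ => T/2 * (1/2:ℝ)^n) atTop (nhds 0) := by
      simpa using (tendsto_pow_atTop_nhds_zero_of_lt_one (by norm_num : (0:ℝ) ≤ 1/2)
        (by norm_num : (1/2:ℝ) < 1)).const_mul (T/2)
    exact squeeze_zero (fun n => (hinv n).1.1.le) hbound hg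
  refine ⟨t, fun k => ⟨(hinv k).1.1, by linarith [(hinv k).1.2]⟩,
    strictAnti_nat_of_succ_lt hdec, htend, fun k => ⟨(hinv k).2.1, (hinv k).2.2⟩⟩
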